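/- Let G be a finite group, H ≤ K ≤ G subgroups, and U an irreducible finite-dimensional complex representation of K with U^H ≠ 0 and such that the pointwise stabilizer in K of U^H equals H, i.e., K_{(U^H)} = H. Let W = Ind_K^G(U) and let V be any irreducible component of W. Then G_{(W^H)} = H and K_{(V^H)} = H. -/

import Mathlib

set_option synthInstance.maxHeartbeats 1000000
set_option maxHeartbeats 1000000

/-- The fixed-point subspace `V^H` of a subgroup `H` under a representation `ρ`. -/
def fixedSubmodule {G : Type*} [Group G] {V : Type*} [AddCommGroup V] [Module ℂ V]
    (ρ : Representation ℂ G V) (H : Subgroup G) : Submodule ℂ V where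
  carrier := {v | ∀ h ∈ H, ρ h v = v}
  add_mem' := by
    intro a b ha hb h hh
    rw [map_add, ha h hh, hb h hh]
  zero_mem' := by intro h hh; simp
  smul_mem' := by
    intro c v hv h hh
    rw [map_smul, hv h hh]

/-- The pointwise stabilizer subgroup `G_(X)` of a subset `X` under a representation `ρ`. -/
def repStab {G : Type*} [Group G] {V : Type*} [AddCommGroup V] [Module ℂ V]
    (ρ : Representation ℂ G V) (X : Set V) : Subgroup G where
  carrier := {g | ∀ x ∈ X, ρ g x = x}
  one_mem' := by intro x hx; simp
  mul_mem' := by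
    intro a b ha hb x hx
    rw [map_mul, Module.End.mul_apply, hb x hx, ha x hx]
  inv_mem' := by
    intro a ha x hx
    have h1 : ρ a x = x := ha x hx
    calc ρ a⁻¹ x = ρ a⁻¹ (ρ a x) := by rw [h1]
      _ = ρ (a⁻¹ * a) x := by rw [map_mul, Module.End.mul_apply]
      _ = x := by simp

/-- A representation is irreducible if the space is nontrivial and the only invariant
subspaces are `⊥` and `⊤`. -/
def IsIrredRep {G : Type*} [Group G] {V : Type*} [AddCommGroup V] [Module ℂ V]
    (ρ : Representation ℂ G V) : Prop :=
  Nontrivial V ∧ ∀ p : Submodule ℂ V, (∀ g : G, ∀ v ∈ p, ρ g v ∈ p) → p = ⊥ ∨ p = ⊤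

/-- The subrepresentation on an invariant submodule. -/
def subRep {G : Type*} [Group G] {V : Type*} [AddCommGroup V] [Module ℂ V]
    (ρ : Representation ℂ G V) (p : Submodule ℂ V)
    (hp : ∀ g : G, ∀ v ∈ p, ρ g v ∈ p) : Representation ℂ G p where
  toFun g := (ρ g).restrict (hp g)
  map_one' := by
    ext v
    simp [LinearMap.restrict_apply]
  map_mul' := by
    intro g g'
    ext v
    simp [LinearMap.restrict_apply, map_mul]

/-- The carrier of the induced representation `Ind_K^G U`, realized as the space of
functions `f : G → U` satisfying `f (k * g) = σ k (f g)`; the canonical copy `eU` of `U`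
inside it consists of the functions supported on `K`. -/
def indCarrier {G : Type*} [Group G] {U : Type*} [AddCommGroup U] [Module ℂ U]
    (K : Subgroup G) (σ : Representation ℂ K U) : Submodule ℂ (G → U) where
  carrier := {f | ∀ (k : K) (g : G), f (↑k * g) = σ k (f g)}
  add_mem' := by
    intro a b ha hb k g
    simp [ha k g, hb k g]
  zero_mem' := by intro k g; simp
  smul_mem' := by
    intro c f hf k g
    simp [hf k g]

/-- The induced representation `Ind_K^G U`, with `G` acting by right translation. -/
def indRep {G : Type*} [Group G] {U : Type*} [AddCommGroup U] [Module ℂ U]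
    (K : Subgroup G) (σ : Representation ℂ K U) :
    Representation ℂ G (indCarrier K σ) where
  toFun g :=
    { toFun := fun f => ⟨fun x => (f : G → U) (x * g), by
        intro k x
        have := f.2 k (x * g)
        simpa [mul_assoc] using this⟩
      map_add' := by intro a b; ext x; simp
      map_smul' := by intro c a; ext x; simp }
  map_one' := by ext f x; simp
  map_mul' := by
    intro g g'
    ext f x
    simp [mul_assoc]


section AuxRepStab

variable {G : Type*} [Group G] {U : Type*} [AddCommGroup U] [Module ℂ U]

lemma mem_fixedSubmodule_iff {V : Type*} [AddCommGroup V] [Module ℂ V]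
    (ρ : Representation ℂ G V) (H : Subgroup G) (v : V) :
    v ∈ fixedSubmodule ρ H ↔ ∀ h ∈ H, ρ h v = v := Iff.rfl

lemma mem_repStab_iff {V : Type*} [AddCommGroup V] [Module ℂ V]
    (ρ : Representation ℂ G V) (X : Set V) (g : G) :
    g ∈ repStab ρ X ↔ ∀ x ∈ X, ρ g x = x := Iff.rfl

lemma indRep_coe (K : Subgroup G) (σ : Representation ℂ K U) (g : G)
    (f : indCarrier K σ) (x : G) :
    ((indRep K σ g f : indCarrier K σ) : G → U) x = (f : G → U) (x * g) := rfl

open Classical in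
noncomputable def fuFun (K : Subgroup G) (σ : Representation ℂ K U) (u : U) : G → U :=
  fun x => if hx : x ∈ K then σ ⟨x, hx⟩ u else 0

lemma fuFun_mem (K : Subgroup G) (σ : Representation ℂ K U) (u : U) :
    fuFun K σ u ∈ indCarrier K σ := by
  show ∀ (k : K) (g : G), fuFun K σ u (↑k * g) = σ k (fuFun K σ u g)
  intro k g
  by_cases hg : g ∈ K
  · have hkg : (↑k : G) * g ∈ K := K.mul_mem k.2 hg
    have hh : (⟨↑k * g, hkg⟩ : K) = k * ⟨g, hg⟩ := rfl
    simp only [fuFun, dif_pos hg, dif_pos hkg, hh, map_mul, Module.End.mul_apply]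
  · have hkg : ¬ ((↑k : G) * g ∈ K) := by
      intro h
      exact hg (by simpa using K.mul_mem (K.inv_mem k.2) h)
    simp only [fuFun, dif_neg hg, dif_neg hkg, map_zero]

lemma fuFun_one (K : Subgroup G) (σ : Representation ℂ K U) (u : U) :
    fuFun K σ u 1 = u := by
  have h1 : (1 : G) ∈ K := K.one_mem
  have : (⟨(1 : G), h1⟩ : K) = 1 := rfl
  simp only [fuFun, dif_pos h1, this, map_one, Module.End.one_apply]

end AuxRepStab

/-- For `H ≤ K ≤ G`, `U` an irreducible representation of `K` with `U^H ≠ 0` and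
`K_(U^H) = H`, and `V` any irreducible component of `W = Ind_K^G U`: `G_(W^H) = H`
and `K_(V^H) = H`. -/
theorem repStab_eq_of_repStab_eq {G : Type*} [Group G] [Finite G]
    (H K : Subgroup G) (hHK : H ≤ K)
    {U : Type*} [AddCommGroup U] [Module ℂ U] [FiniteDimensional ℂ U]
    (σ : Representation ℂ K U) (hσ : IsIrredRep σ)
    (hUH : fixedSubmodule σ (H.subgroupOf K) ≠ ⊥)
    (hKU : (repStab σ ↑(fixedSubmodule σ (H.subgroupOf K))).map K.subtype = H)
    (p : Submodule ℂ (indCarrier K σ))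
    (hp : ∀ g : G, ∀ v ∈ p, indRep K σ g v ∈ p)
    (hpirr : IsIrredRep (V := ↥p) (subRep (indRep K σ) p hp)) :
    repStab (indRep K σ) ↑(fixedSubmodule (indRep K σ) H) = H ∧
      K ⊓ repStab (indRep K σ) ↑(fixedSubmodule (indRep K σ) H ⊓ p) = H :=  by
  -- the canonical copy of `U` inside the induced representation
  classical
  -- `fu u` is the element of `Ind` supported on `K` with value `σ k u` at `k`
  have hfu_fixed : ∀ u ∈ fixedSubmodule σ (H.subgroupOf K),
      (⟨fuFun K σ u, fuFun_mem K σ u⟩ : indCarrier K σ) ∈ fixedSubmodule (indRep K σ) H := by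
    intro u hu h hh
    apply Subtype.ext
    funext x
    show fuFun K σ u (x * h) = fuFun K σ u x
    by_cases hx : x ∈ K
    · have hxh : x * h ∈ K := K.mul_mem hx (hHK hh)
      have hprod : (⟨x * h, hxh⟩ : K) = ⟨x, hx⟩ * ⟨h, hHK hh⟩ := rfl
      have hmem : (⟨h, hHK hh⟩ : K) ∈ H.subgroupOf K := by
        simpa [Subgroup.mem_subgroupOf] using hh
      have hfix : σ ⟨h, hHK hh⟩ u = u := hu _ hmem
      simp only [fuFun, dif_pos hx, dif_pos hxh, hprod, map_mul,
        Module.End.mul_apply, hfix]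
    · have hxh : ¬ (x * h ∈ K) := by
        intro hc
        exact hx (by simpa using K.mul_mem hc (K.inv_mem (hHK hh)))
      simp only [fuFun, dif_neg hx, dif_neg hxh]
  have hstab_to_H : ∀ g : G, ∀ hg : g ∈ K,
      (∀ u ∈ fixedSubmodule σ (H.subgroupOf K), σ ⟨g, hg⟩ u = u) → g ∈ H := by
    intro g hg hfix
    rw [← hKU]
    exact ⟨⟨g, hg⟩, fun u hu => hfix u hu, rfl⟩
  obtain ⟨u₀, hu₀mem, hu₀⟩ := Submodule.exists_mem_ne_zero_of_ne_bot hUH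
  -- first claim
  have claim1 : repStab (indRep K σ) ↑(fixedSubmodule (indRep K σ) H) = H := by
    apply le_antisymm
    · intro g hg
      have h1 : indRep K σ g ⟨fuFun K σ u₀, fuFun_mem K σ u₀⟩ =
          ⟨fuFun K σ u₀, fuFun_mem K σ u₀⟩ := hg _ (hfu_fixed u₀ hu₀mem)
      have h2 : fuFun K σ u₀ (1 * g) = fuFun K σ u₀ 1 :=
        congrFun (congrArg Subtype.val h1) 1
      rw [one_mul, fuFun_one] at h2
      have hgK : g ∈ K := by
        by_contra hgK
        rw [fuFun, dif_neg hgK] at h2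
        exact hu₀ h2.symm
      apply hstab_to_H g hgK
      intro u hu
      have h3 : indRep K σ g ⟨fuFun K σ u, fuFun_mem K σ u⟩ =
          ⟨fuFun K σ u, fuFun_mem K σ u⟩ := hg _ (hfu_fixed u hu)
      have h4 : fuFun K σ u (1 * g) = fuFun K σ u 1 :=
        congrFun (congrArg Subtype.val h3) 1
      rw [one_mul, fuFun_one, fuFun, dif_pos hgK] at h4
      exact h4
    · intro g hg f hf
      exact hf g hg
  refine ⟨claim1, ?_⟩
  -- evaluation at `1` as a linear map
  let ev : indCarrier K σ →ₗ[ℂ] U :=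
    { toFun := fun f => (f : G → U) 1
      map_add' := fun a b => rfl
      map_smul' := fun c a => rfl }
  have hev_rep : ∀ (k : K) (f : indCarrier K σ), σ k (ev f) = ev (indRep K σ k f) := by
    intro k f
    have h1 : (f : G → U) ((k : G) * 1) = σ k ((f : G → U) 1) := f.2 k 1
    show σ k ((f : G → U) 1) = (f : G → U) (1 * (k : G))
    rw [← h1, mul_one, one_mul]
  -- the image of `p` under evaluation at 1 is all of `U`
  have hsurj : ∀ u : U, ∃ f : indCarrier K σ, f ∈ p ∧ (f : G → U) 1 = u := by
    have hQinv : ∀ k : K, ∀ u ∈ p.map ev, σ k u ∈ p.map ev := by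
      intro k u hu
      obtain ⟨f, hf, rfl⟩ := hu
      exact ⟨indRep K σ k f, hp k f hf, (hev_rep k f).symm⟩
    have hQne : p.map ev ≠ ⊥ := by
      haveI : Nontrivial p := hpirr.1
      obtain ⟨fp, hfp⟩ := exists_ne (0 : p)
      have hf0 : (fp : indCarrier K σ) ≠ 0 := fun hc => hfp (Subtype.ext hc)
      have hf1 : ((fp : indCarrier K σ) : G → U) ≠ 0 := fun hc => hf0 (Subtype.ext hc)
      obtain ⟨g0, hg0⟩ := Function.ne_iff.mp hf1
      rw [Submodule.ne_bot_iff]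
      refine ⟨ev (indRep K σ g0 fp), ⟨indRep K σ g0 (fp : indCarrier K σ), hp g0 _ fp.2, rfl⟩, ?_⟩
      show ((fp : indCarrier K σ) : G → U) (1 * g0) ≠ 0
      rwa [one_mul]
    have := hσ.2 (p.map ev) hQinv
    rcases this with h | h
    · exact absurd h hQne
    · intro u
      have : u ∈ p.map ev := h ▸ Submodule.mem_top
      obtain ⟨f, hf, hfu⟩ := this
      exact ⟨f, hf, hfu⟩
  -- averaging: produce `H`-fixed vectors in `p` over any `u ∈ U^H`
  haveI : Fintype H := Fintype.ofFinite H
  have hcard : ((Fintype.card H : ℂ)) ≠ 0 := by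
    exact_mod_cast Fintype.card_ne_zero
  have havg : ∀ u ∈ fixedSubmodule σ (H.subgroupOf K),
      ∃ f : indCarrier K σ, f ∈ p ∧ f ∈ fixedSubmodule (indRep K σ) H ∧ (f : G → U) 1 = u := by
    intro u hu
    obtain ⟨f, hfp, hf1⟩ := hsurj u
    set c : ℂ := (Fintype.card H : ℂ)⁻¹ with hc
    set f' : indCarrier K σ := c • ∑ h : H, indRep K σ (h : G) f with hf'
    refine ⟨f', ?_, ?_, ?_⟩
    · exact Submodule.smul_mem _ _ (Submodule.sum_mem _ fun h _ => hp _ f hfp)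
    · intro h0 hh0
      rw [hf', map_smul, map_sum]
      congr 1
      have hre : ∀ h : H, indRep K σ h0 (indRep K σ (h : G) f) =
          indRep K σ ((((⟨h0, hh0⟩ : H) * h : H) : G)) f := by
        intro h
        rw [← Module.End.mul_apply, ← map_mul]
        rfl
      calc (∑ h : H, indRep K σ h0 (indRep K σ (h : G) f))
          = ∑ h : H, indRep K σ ((((⟨h0, hh0⟩ : H) * h : H) : G)) f := by
            exact Finset.sum_congr rfl fun h _ => hre h
        _ = ∑ h : H, indRep K σ (h : G) f :=
            Fintype.sum_equiv (Equiv.mulLeft (⟨h0, hh0⟩ : H)) _ _ (fun h => rfl)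
    · have hterm : ∀ h : H, ev (indRep K σ (h : G) f) = u := by
        intro h
        have hhk : (h : G) ∈ K := hHK h.2
        have h1 : σ ⟨(h : G), hhk⟩ ((f : G → U) 1) = ev (indRep K σ (h : G) f) :=
          hev_rep ⟨(h : G), hhk⟩ f
        have hmem : (⟨(h : G), hhk⟩ : K) ∈ H.subgroupOf K := by
          simpa [Subgroup.mem_subgroupOf] using h.2
        rw [← h1, hf1, hu _ hmem]
      have : ev f' = u := by
        rw [hf', map_smul, map_sum]
        rw [Finset.sum_congr rfl fun h _ => hterm h]
        simp only [Finset.sum_const, Finset.card_univ]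
        rw [← Nat.cast_smul_eq_nsmul ℂ, smul_smul, hc, inv_mul_cancel₀ hcard, one_smul]
      exact this
  -- second claim
  apply le_antisymm
  · intro g hg
    obtain ⟨hgK, hgS⟩ := hg
    apply hstab_to_H g hgK
    intro u hu
    obtain ⟨f, hfp, hffix, hf1⟩ := havg u hu
    have hmem : f ∈ (↑(fixedSubmodule (indRep K σ) H ⊓ p) : Set (indCarrier K σ)) :=
      Submodule.mem_inf.mpr ⟨hffix, hfp⟩
    have h1 : indRep K σ g f = f := hgS f hmem
    have h2 : (f : G → U) (1 * g) = (f : G → U) 1 :=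
      congrFun (congrArg Subtype.val h1) 1
    rw [one_mul, hf1] at h2
    have h3 : (f : G → U) ((g : G) * 1) = σ ⟨g, hgK⟩ ((f : G → U) 1) := f.2 ⟨g, hgK⟩ 1
    have h3' : (f : G → U) g = σ ⟨g, hgK⟩ u := by simpa [hf1] using h3
    rw [← h3']
    exact h2
  · intro g hg
    refine ⟨hHK hg, ?_⟩
    intro f hf
    exact (Submodule.mem_inf.mp hf).1 g hg
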